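/- Let M = (m_{i,j}) be an optimal n×n binary matrix. Then the binary dual matrix M̄ = (d_{i,j}) defined by d_{i,j} = 1 − m_{i,j} is optimal. -/

import Mathlib

/-- `M` is a binary (0/1) matrix. -/
def IsBinary {n : ℕ} (M : Fin n → Fin n → ℕ) : Prop :=
  ∀ i j, M i j = 0 ∨ M i j = 1

/-- Every row and every column of `M` contains exactly `k` entries equal to `1`. -/
def IsUniform {n : ℕ} (k : ℕ) (M : Fin n → Fin n → ℕ) : Prop :=
  (∀ i, (Finset.univ.filter fun j => M i j = 1).card = k) ∧
  (∀ j, (Finset.univ.filter fun i => M i j = 1).card = k)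

/-- Partial row sum `S_{i,j}`: sum of the entries of row `i` in columns `≤ j`. -/
def RowSum {n : ℕ} (M : Fin n → Fin n → ℕ) (i j : Fin n) : ℕ :=
  ∑ l ∈ Finset.Iic j, M i l

/-- An assignment mapping between columns `j` and `j'`: a bijection from
`{i : M i j = 1}` onto `{i : M i j' = 1}`. -/
def IsAssignment {n : ℕ} (M : Fin n → Fin n → ℕ) (j j' : Fin n) (φ : Fin n → Fin n) : Prop :=
  Set.BijOn φ {i | M i j = 1} {i | M i j' = 1}

/-- Condition (2): `S_{φ(i),j} ≤ S_{i,j}` for all `i` in the domain. -/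
def Cond2 {n : ℕ} (M : Fin n → Fin n → ℕ) (j : Fin n) (φ : Fin n → Fin n) : Prop :=
  ∀ i, M i j = 1 → RowSum M (φ i) j ≤ RowSum M i j

/-- Condition (1): `φ(i) = i` exactly when `m_{i,j} = m_{i,j'} = 1`. -/
def Cond1 {n : ℕ} (M : Fin n → Fin n → ℕ) (j j' : Fin n) (φ : Fin n → Fin n) : Prop :=
  ∀ i, M i j = 1 → (φ i = i ↔ (M i j = 1 ∧ M i j' = 1))

/-- `M` is optimal: it is `k`-uniform for some `k`, and between each pair of consecutive
columns there is an assignment mapping satisfying Condition (2). -/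
def Optimal {n : ℕ} (M : Fin n → Fin n → ℕ) : Prop :=
  (∃ k, IsUniform k M) ∧
  ∀ j : ℕ, ∀ hj : j + 1 < n, ∃ φ : Fin n → Fin n,
    IsAssignment M ⟨j, Nat.lt_of_succ_lt hj⟩ ⟨j + 1, hj⟩ φ ∧
    Cond2 M ⟨j, Nat.lt_of_succ_lt hj⟩ φ

/-- the entrywise binary complement of an optimal binary matrix is
optimal. -/

lemma count_mono {n : ℕ} {A B : Finset (Fin n)} {f : Fin n → ℕ} {φ : Fin n → Fin n}
    (hbij : Set.BijOn φ ↑A ↑B) (hle : ∀ i ∈ A, f (φ i) ≤ f i) (t : ℕ) :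
    (A.filter fun i => f i ≤ t).card ≤ (B.filter fun i => f i ≤ t).card := by
  apply Finset.card_le_card_of_injOn φ
  · intro i hi
    rw [Finset.mem_coe, Finset.mem_filter] at hi ⊢
    exact ⟨hbij.mapsTo hi.1, le_trans (hle i hi.1) hi.2⟩
  · intro a ha b hb h
    exact hbij.injOn (Finset.mem_filter.mp ha).1 (Finset.mem_filter.mp hb).1 h

lemma exists_bij {n : ℕ} : ∀ (N : ℕ) (A B : Finset (Fin n)) (f : Fin n → ℕ),
    A.card = N → A.card = B.card →
    (∀ t, (A.filter fun i => f i ≤ t).card ≤ (B.filter fun i => f i ≤ t).card) →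
    ∃ φ : Fin n → Fin n, Set.BijOn φ ↑A ↑B ∧ ∀ i ∈ A, f (φ i) ≤ f i := by
  intro N
  induction N with
  | zero =>
    intro A B f hA hAB _
    have hA0 : A = ∅ := Finset.card_eq_zero.mp hA
    have hB0 : B = ∅ := Finset.card_eq_zero.mp (by omega)
    subst hA0; subst hB0
    exact ⟨id, by simp [Set.bijOn_empty], by simp⟩
  | succ N ih =>
    intro A B f hA hAB hcount
    have hAne : A.Nonempty := Finset.card_pos.mp (by omega)
    have hBne : B.Nonempty := Finset.card_pos.mp (by omega)
    obtain ⟨a, haA, hamax⟩ := Finset.exists_max_image A f hAne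
    obtain ⟨b, hbB, hbmax⟩ := Finset.exists_max_image B f hBne
    have hba : f b ≤ f a := by
      have h1 : A.filter (fun i => f i ≤ f a) = A :=
        Finset.filter_true_of_mem (fun i hi => hamax i hi)
      have h2 := hcount (f a)
      rw [h1] at h2
      have h3 : B.filter (fun i => f i ≤ f a) = B :=
        Finset.eq_of_subset_of_card_le (Finset.filter_subset _ _) (by omega)
      have := Finset.mem_filter.mp (h3 ▸ hbB)
      exact this.2
    have hcount' : ∀ t, ((A.erase a).filter fun i => f i ≤ t).card ≤
        ((B.erase b).filter fun i => f i ≤ t).card := by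
      intro t
      by_cases ht : t < f b
      · have hA' : (A.erase a).filter (fun i => f i ≤ t) = A.filter (fun i => f i ≤ t) := by
          rw [Finset.filter_erase, Finset.erase_eq_of_notMem]
          simp only [Finset.mem_filter]
          rintro ⟨-, h⟩; omega
        have hB' : (B.erase b).filter (fun i => f i ≤ t) = B.filter (fun i => f i ≤ t) := by
          rw [Finset.filter_erase, Finset.erase_eq_of_notMem]
          simp only [Finset.mem_filter]
          rintro ⟨-, h⟩; omega
        rw [hA', hB']; exact hcount t
      · push_neg at ht
        have hB' : (B.erase b).filter (fun i => f i ≤ t) = B.erase b :=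
          Finset.filter_true_of_mem (fun i hi =>
            le_trans (hbmax i (Finset.mem_of_mem_erase hi)) ht)
        rw [hB', Finset.card_erase_of_mem hbB]
        calc ((A.erase a).filter fun i => f i ≤ t).card
            ≤ (A.erase a).card := Finset.card_le_card (Finset.filter_subset _ _)
          _ = B.card - 1 := by rw [Finset.card_erase_of_mem haA]; omega
    obtain ⟨φ', hbij', hle'⟩ := ih (A.erase a) (B.erase b) f
      (by rw [Finset.card_erase_of_mem haA]; omega)
      (by rw [Finset.card_erase_of_mem haA, Finset.card_erase_of_mem hbB]; omega)
      hcount'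
    refine ⟨Function.update φ' a b, ⟨?_, ?_, ?_⟩, ?_⟩
    · intro i hi
      by_cases h : i = a
      · subst h; simp [hbB]
      · rw [Function.update_of_ne h]
        exact Finset.mem_of_mem_erase (hbij'.mapsTo (by simp; exact ⟨hi, h⟩))
    · intro x hx y hy hxy
      by_cases hxa : x = a <;> by_cases hya : y = a
      · rw [hxa, hya]
      · exfalso
        rw [hxa, Function.update_self, Function.update_of_ne hya] at hxy
        have : φ' y ∈ B.erase b := hbij'.mapsTo (by simp; exact ⟨hy, hya⟩)
        rw [← hxy] at this
        exact (Finset.mem_erase.mp this).1 rfl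
      · exfalso
        rw [hya, Function.update_self, Function.update_of_ne hxa] at hxy
        have : φ' x ∈ B.erase b := hbij'.mapsTo (by simp; exact ⟨hx, hxa⟩)
        rw [hxy] at this
        exact (Finset.mem_erase.mp this).1 rfl
      · rw [Function.update_of_ne hxa, Function.update_of_ne hya] at hxy
        exact hbij'.injOn (by simp; exact ⟨hx, hxa⟩)
          (by simp; exact ⟨hy, hya⟩) hxy
    · intro y hy
      by_cases h : y = b
      · exact ⟨a, haA, by simp [h]⟩
      · obtain ⟨x, hx, hφx⟩ := hbij'.surjOn
          (show y ∈ (↑(B.erase b) : Set (Fin n)) by simp; exact ⟨hy, h⟩)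
        have hxA : x ∈ A.erase a := hx
        have hxa : x ≠ a := (Finset.mem_erase.mp hxA).1
        exact ⟨x, Finset.mem_of_mem_erase hxA, by rwa [Function.update_of_ne hxa]⟩
    · intro i hi
      by_cases h : i = a
      · subst h; simpa using hba
      · rw [Function.update_of_ne h]
        exact hle' i (Finset.mem_erase.mpr ⟨h, hi⟩)

lemma split_count {n : ℕ} (p q : Fin n → Prop) [DecidablePred p] [DecidablePred q] :
    ((Finset.univ.filter p).filter q).card +
      ((Finset.univ.filter fun i => ¬ p i).filter q).card = (Finset.univ.filter q).card := by
  have h := Finset.card_filter_add_card_filter_not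
    (s := Finset.univ.filter q) (p := p)
  have e1 : ((Finset.univ.filter p).filter q) = ((Finset.univ.filter q).filter p) := by
    ext i; simp [and_comm]
  have e2 : ((Finset.univ.filter fun i => ¬ p i).filter q) =
      ((Finset.univ.filter q).filter fun i => ¬ p i) := by
    ext i; simp [and_comm]
  rw [e1, e2]; exact h

theorem stmt_10 {n : ℕ} (M : Fin n → Fin n → ℕ) (hbin : IsBinary M)
    (hopt : Optimal M) :
    Optimal (fun i j => 1 - M i j) := by
  obtain ⟨⟨k, hrow, hcol⟩, hass⟩ := hopt
  constructor
  · refine ⟨n - k, fun i => ?_, fun j => ?_⟩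
    · have he : (Finset.univ.filter fun j => 1 - M i j = 1) =
          Finset.univ \ (Finset.univ.filter fun j => M i j = 1) := by
        ext j
        simp only [Finset.mem_filter, Finset.mem_sdiff, Finset.mem_univ, true_and]
        rcases hbin i j with h | h <;> simp [h]
      rw [he, Finset.card_sdiff_of_subset (Finset.filter_subset _ _), hrow i, Finset.card_univ,
        Fintype.card_fin]
    · have he : (Finset.univ.filter fun i => 1 - M i j = 1) =
          Finset.univ \ (Finset.univ.filter fun i => M i j = 1) := by
        ext i
        simp only [Finset.mem_filter, Finset.mem_sdiff, Finset.mem_univ, true_and]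
        rcases hbin i j with h | h <;> simp [h]
      rw [he, Finset.card_sdiff_of_subset (Finset.filter_subset _ _), hcol j, Finset.card_univ,
        Fintype.card_fin]
  · intro j hj
    obtain ⟨φ, hφbij, hφ2⟩ := hass j hj
    set j0 : Fin n := ⟨j, Nat.lt_of_succ_lt hj⟩ with hj0
    set j1 : Fin n := ⟨j + 1, hj⟩ with hj1
    set f : Fin n → ℕ := fun i => RowSum M i j0 with hf
    set g : Fin n → ℕ := fun i => RowSum (fun i j => 1 - M i j) i j0 with hg
    set C : ℕ := (Finset.Iic j0).card with hC
    have hid : ∀ i, g i + f i = C := by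
      intro i
      rw [hg, hf]
      simp only [RowSum]
      rw [← Finset.sum_add_distrib]
      rw [show C = ∑ l ∈ Finset.Iic j0, 1 from by simp [hC]]
      exact Finset.sum_congr rfl fun l _ => by rcases hbin i l with h | h <;> simp [h]
    set A : Finset (Fin n) := Finset.univ.filter (fun i => M i j0 = 1) with hA
    set B : Finset (Fin n) := Finset.univ.filter (fun i => M i j1 = 1) with hB
    set Ab : Finset (Fin n) := Finset.univ.filter (fun i => ¬ M i j0 = 1) with hAb
    set Bb : Finset (Fin n) := Finset.univ.filter (fun i => ¬ M i j1 = 1) with hBb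
    have hcoeA : (↑A : Set (Fin n)) = {i | M i j0 = 1} := by ext i; simp [hA]
    have hcoeB : (↑B : Set (Fin n)) = {i | M i j1 = 1} := by ext i; simp [hB]
    have hbijAB : Set.BijOn φ ↑A ↑B := by rw [hcoeA, hcoeB]; exact hφbij
    have hle : ∀ i ∈ A, f (φ i) ≤ f i := by
      intro i hi
      exact hφ2 i (Finset.mem_filter.mp hi).2
    have hcnt : ∀ t, (A.filter fun i => f i ≤ t).card ≤ (B.filter fun i => f i ≤ t).card :=
      count_mono hbijAB hle
    have hcardA : A.card = k := hcol j0
    have hcardB : B.card = k := hcol j1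
    have hsumA : A.card + Ab.card = n := by
      have := Finset.card_filter_add_card_filter_not
        (s := (Finset.univ : Finset (Fin n))) (p := fun i => M i j0 = 1)
      simpa [hA, hAb] using this
    have hsumB : B.card + Bb.card = n := by
      have := Finset.card_filter_add_card_filter_not
        (s := (Finset.univ : Finset (Fin n))) (p := fun i => M i j1 = 1)
      simpa [hB, hBb] using this
    have hdualcnt : ∀ t, (Ab.filter fun i => g i ≤ t).card ≤ (Bb.filter fun i => g i ≤ t).card := by
      intro t
      have sA := split_count (fun i => M i j0 = 1) (fun i => g i ≤ t)
      have sB := split_count (fun i => M i j1 = 1) (fun i => g i ≤ t)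
      have iA := Finset.card_filter_add_card_filter_not
        (s := A) (p := fun i => g i ≤ t)
      have iB := Finset.card_filter_add_card_filter_not
        (s := B) (p := fun i => g i ≤ t)
      rw [← hA, ← hAb] at sA
      rw [← hB, ← hBb] at sB
      have key : (A.filter fun i => ¬ g i ≤ t).card ≤ (B.filter fun i => ¬ g i ≤ t).card := by
        by_cases hCt : C ≤ t
        · have hAe : (A.filter fun i => ¬ g i ≤ t) = ∅ := by
            rw [Finset.filter_eq_empty_iff]
            intro i _ h
            exact h (by have := hid i; omega)
          have hBe : (B.filter fun i => ¬ g i ≤ t) = ∅ := by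
            rw [Finset.filter_eq_empty_iff]
            intro i _ h
            exact h (by have := hid i; omega)
          rw [hAe, hBe]
        · have hiff : ∀ i, (¬ g i ≤ t) ↔ f i ≤ C - t - 1 := by
            intro i
            have := hid i
            omega
          calc (A.filter fun i => ¬ g i ≤ t).card
              = (A.filter fun i => f i ≤ C - t - 1).card := by
                apply Finset.card_nbij id (fun a ha => ?_) (fun a ha b hb h => h)
                  (fun b hb => ⟨b, ?_, rfl⟩)
                · rw [Finset.mem_coe, Finset.mem_filter] at ha ⊢
                  exact ⟨ha.1, (hiff a).mp ha.2⟩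
                · rw [Finset.mem_coe, Finset.mem_filter] at hb ⊢
                  exact ⟨hb.1, (hiff b).mpr hb.2⟩
            _ ≤ (B.filter fun i => f i ≤ C - t - 1).card := hcnt _
            _ = (B.filter fun i => ¬ g i ≤ t).card := by
                apply Finset.card_nbij id (fun a ha => ?_) (fun a ha b hb h => h)
                  (fun b hb => ⟨b, ?_, rfl⟩)
                · rw [Finset.mem_coe, Finset.mem_filter] at ha ⊢
                  exact ⟨ha.1, (hiff a).mpr ha.2⟩
                · rw [Finset.mem_coe, Finset.mem_filter] at hb ⊢
                  exact ⟨hb.1, (hiff b).mp hb.2⟩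
      omega
    obtain ⟨ψ, hψbij, hψle⟩ := exists_bij Ab.card Ab Bb g rfl (by omega) hdualcnt
    refine ⟨ψ, ?_, ?_⟩
    · have e1 : {i : Fin n | 1 - M i j0 = 1} = (↑Ab : Set (Fin n)) := by
        ext i
        simp only [Set.mem_setOf_eq, hAb, Finset.coe_filter, Finset.mem_univ, true_and,
          Set.mem_setOf_eq]
        rcases hbin i j0 with h | h <;> simp [h]
      have e2 : {i : Fin n | 1 - M i j1 = 1} = (↑Bb : Set (Fin n)) := by
        ext i
        simp only [Set.mem_setOf_eq, hBb, Finset.coe_filter, Finset.mem_univ, true_and,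
          Set.mem_setOf_eq]
        rcases hbin i j1 with h | h <;> simp [h]
      show Set.BijOn ψ {i : Fin n | 1 - M i j0 = 1} {i : Fin n | 1 - M i j1 = 1}
      rw [e1, e2]
      exact hψbij
    · intro i hi
      have hiAb : i ∈ Ab := by
        rw [hAb, Finset.mem_filter]
        refine ⟨Finset.mem_univ i, ?_⟩
        intro h
        simp only at hi
        rw [show M i j0 = 1 from h] at hi
        omega
      exact hψle i hiAb
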